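/- Let α, β ∈ ℂ with α + β = k, let 0 < η < ρ, fix u ∈ S^k(ρ), and let ω(m,u) = (ρ² − η²)/|u − m|² for m ∈ S^k(η). Then ∫_{S^k(η)} ω^α(m,u) dS_m = ∫_{S^k(η)} ω^β(m,u) dS_m. -/

import Mathlib

open MeasureTheory Metric Complex Set Filter
open scoped ENNReal NNReal Topology

set_option linter.unusedSectionVars false
set_option maxHeartbeats 1000000



section Inversion

variable {E : Type*} [NormedAddCommGroup E] [InnerProductSpace ℝ E]

/-- Inversion centered at `u` with radius squared `r2`. -/
noncomputable def sphInv (u : E) (r2 : ℝ) (x : E) : E :=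
  u + (r2 / ‖x - u‖ ^ 2) • (x - u)

lemma sphInv_sub (u : E) (r2 : ℝ) (x : E) :
    sphInv u r2 x - u = (r2 / ‖x - u‖ ^ 2) • (x - u) := by
  simp [sphInv]

lemma norm_sphInv_sub (u : E) {r2 : ℝ} (hr2 : 0 ≤ r2) {x : E} (hx : x ≠ u) :
    ‖sphInv u r2 x - u‖ = r2 / ‖x - u‖ := by
  have h : ‖x - u‖ ≠ 0 := by
    simpa [sub_eq_zero] using hx
  rw [sphInv_sub, norm_smul, Real.norm_of_nonneg (by positivity)]
  field_simp

lemma sphInv_involutive (u : E) {r2 : ℝ} (hr2 : 0 < r2) {x : E} (hx : x ≠ u) :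
    sphInv u r2 (sphInv u r2 x) = x := by
  have h : ‖x - u‖ ≠ 0 := by simpa [sub_eq_zero] using hx
  have key : sphInv u r2 x - u = (r2 / ‖x - u‖ ^ 2) • (x - u) := sphInv_sub u r2 x
  rw [sphInv, key, norm_smul, Real.norm_of_nonneg (by positivity), smul_smul]
  have : r2 / (r2 / ‖x - u‖ ^ 2 * ‖x - u‖) ^ 2 * (r2 / ‖x - u‖ ^ 2) = 1 := by
    field_simp
  rw [this, one_smul]
  abel

lemma norm_sphInv_sub_sphInv (u : E) {r2 : ℝ} (hr2 : 0 ≤ r2) {x y : E}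
    (hx : x ≠ u) (hy : y ≠ u) :
    ‖sphInv u r2 x - sphInv u r2 y‖ = r2 * ‖x - y‖ / (‖x - u‖ * ‖y - u‖) := by
  have hxn : ‖x - u‖ ≠ 0 := by simpa [sub_eq_zero] using hx
  have hyn : ‖y - u‖ ≠ 0 := by simpa [sub_eq_zero] using hy
  have hdiff : sphInv u r2 x - sphInv u r2 y
      = (r2 / ‖x - u‖ ^ 2) • (x - u) - (r2 / ‖y - u‖ ^ 2) • (y - u) := by
    simp only [sphInv]; abel
  have hxy : ‖x - y‖ ^ 2 = ‖x - u‖ ^ 2 - 2 * inner ℝ (x - u) (y - u) + ‖y - u‖ ^ 2 := by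
    have h' : x - y = (x - u) - (y - u) := by abel
    rw [h', norm_sub_sq_real]
  have hsq : ‖sphInv u r2 x - sphInv u r2 y‖ ^ 2
      = (r2 * ‖x - y‖ / (‖x - u‖ * ‖y - u‖)) ^ 2 := by
    rw [hdiff, norm_sub_sq_real, norm_smul, norm_smul, real_inner_smul_left,
      real_inner_smul_right, Real.norm_of_nonneg (show (0:ℝ) ≤ r2 / ‖x - u‖ ^ 2 by positivity),
      Real.norm_of_nonneg (show (0:ℝ) ≤ r2 / ‖y - u‖ ^ 2 by positivity),
      div_pow]
    have hR : (r2 * ‖x - y‖) ^ 2 = r2 ^ 2 * (‖x - u‖ ^ 2 - 2 * inner ℝ (x - u) (y - u) + ‖y - u‖ ^ 2) := by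
      rw [mul_pow, hxy]
    rw [hR]
    field_simp
    ring
  have h1 : 0 ≤ ‖sphInv u r2 x - sphInv u r2 y‖ := norm_nonneg _
  have h2 : 0 ≤ r2 * ‖x - y‖ / (‖x - u‖ * ‖y - u‖) := by positivity
  nlinarith [hsq, h1, h2]

lemma sphInv_mem_sphere {u : E} {ρ η : ℝ} (hη : 0 < η) (hηρ : η < ρ)
    (hu : ‖u‖ = ρ) {x : E} (hx : ‖x‖ = η) :
    ‖sphInv u (ρ^2 - η^2) x‖ = η := by
  have hxu : x ≠ u := by
    intro h; rw [h, hu] at hx; exact absurd hx (by linarith)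
  have hxn : ‖x - u‖ ≠ 0 := by simpa [sub_eq_zero] using hxu
  have hD : ‖x - u‖ ^ 2 = η^2 + ρ^2 - 2 * inner ℝ x u := by
    rw [norm_sub_sq_real, hx, hu]; ring
  have hsq : ‖sphInv u (ρ^2 - η^2) x‖ ^ 2 = η ^ 2 := by
    rw [sphInv, norm_add_sq_real, real_inner_smul_right, norm_smul,
      Real.norm_of_nonneg (show (0:ℝ) ≤ (ρ^2 - η^2) / ‖x - u‖ ^ 2 by
        have : (0:ℝ) ≤ ρ^2 - η^2 := by nlinarith
        positivity)]
    have hua : inner ℝ u (x - u) = (inner ℝ x u : ℝ) - ρ^2 := by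
      rw [inner_sub_right, real_inner_self_eq_norm_sq, hu, real_inner_comm]
    rw [hua, hu, mul_pow, div_pow]
    have hD' : ‖x - u‖ ^ 2 ≠ 0 := pow_ne_zero 2 hxn
    generalize hg : ‖x - u‖ ^ 2 = D at hD hD' ⊢
    set t : ℝ := inner ℝ x u with htdef
    field_simp
    linear_combination (ρ^2 - η^2) * hD
  have h1 : 0 ≤ ‖sphInv u (ρ^2 - η^2) x‖ := norm_nonneg _
  nlinarith [hsq, h1, hη.le]

end Inversion


section Squeeze

lemma ennreal_squeeze_aux {k : ℕ} {a b : ℝ≥0∞}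
    (h : ∀ q : ℝ, 1 < q → a ≤ ENNReal.ofReal (q ^ (2 * k)) * b) : a ≤ b := by
  have h1 : Tendsto (fun n : ℕ => (1 + 1 / ((n:ℝ) + 1)) ^ (2 * k)) atTop (𝓝 1) := by
    have h0 : Tendsto (fun n : ℕ => 1 + 1 / ((n:ℝ) + 1)) atTop (𝓝 1) := by
      have : Tendsto (fun n : ℕ => 1 / ((n:ℝ) + 1)) atTop (𝓝 0) := tendsto_one_div_add_atTop_nhds_zero_nat
      simpa using tendsto_const_nhds.add this
    simpa using h0.pow (2 * k)
  have h2 : Tendsto (fun n : ℕ => ENNReal.ofReal ((1 + 1 / ((n:ℝ) + 1)) ^ (2 * k)) * b)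
      atTop (𝓝 (1 * b)) := by
    apply ENNReal.Tendsto.mul_const _ (Or.inl one_ne_zero)
    simpa using ENNReal.tendsto_ofReal h1
  rw [one_mul] at h2
  refine ge_of_tendsto' h2 fun n => ?_
  refine h _ ?_
  have : 0 < 1 / ((n:ℝ) + 1) := by positivity
  linarith

end Squeeze


section Inversion

variable {E : Type*} [NormedAddCommGroup E] [InnerProductSpace ℝ E]










variable {ρ η : ℝ} {u : E}

lemma sph_ne_u (hηρ : η < ρ) (hu : ‖u‖ = ρ) {x : E} (hx : x ∈ sphere (0:E) η) :
    x ≠ u := by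
  rw [mem_sphere_zero_iff_norm] at hx
  intro h; rw [h, hu] at hx; exact absurd hx (by linarith)

lemma sph_dist_lb (hηρ : η < ρ) (hu : ‖u‖ = ρ) {x : E} (hx : x ∈ sphere (0:E) η) :
    ρ - η ≤ ‖x - u‖ := by
  rw [mem_sphere_zero_iff_norm] at hx
  have h := norm_sub_norm_le u x
  rw [hu, hx, ← norm_sub_rev] at h
  linarith

lemma sphInv_mapsTo (hη : 0 < η) (hηρ : η < ρ) (hu : ‖u‖ = ρ) :
    Set.MapsTo (sphInv u (ρ^2 - η^2)) (sphere (0:E) η) (sphere (0:E) η) := by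
  intro x hx
  rw [mem_sphere_zero_iff_norm] at hx ⊢
  exact sphInv_mem_sphere hη hηρ hu hx

lemma sphInv_invol_on (hη : 0 < η) (hηρ : η < ρ) (hu : ‖u‖ = ρ) {x : E}
    (hx : x ∈ sphere (0:E) η) : sphInv u (ρ^2 - η^2) (sphInv u (ρ^2 - η^2) x) = x := by
  have hr2 : 0 < ρ^2 - η^2 := by nlinarith
  exact sphInv_involutive u hr2 (sph_ne_u hηρ hu hx)

lemma sphInv_image_image (hη : 0 < η) (hηρ : η < ρ) (hu : ‖u‖ = ρ) {B : Set E}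
    (hB : B ⊆ sphere (0:E) η) :
    sphInv u (ρ^2 - η^2) '' (sphInv u (ρ^2 - η^2) '' B) = B := by
  ext x
  constructor
  · rintro ⟨y, ⟨z, hz, rfl⟩, rfl⟩
    rwa [sphInv_invol_on hη hηρ hu (hB hz)]
  · intro hx
    exact ⟨_, ⟨x, hx, rfl⟩, sphInv_invol_on hη hηρ hu (hB hx)⟩

end Inversion

section Measure

variable {k : ℕ} {ρ η : ℝ} {u : EuclideanSpace ℝ (Fin (k+1))}

local notation "E'" => EuclideanSpace ℝ (Fin (k+1))

lemma hm_image_le (hη : 0 < η) (hηρ : η < ρ) (hu : ‖u‖ = ρ) {B : Set E'}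
    (hB : B ⊆ sphere (0:E') η) {s : ℝ} (hs : 0 < s)
    (hlb : ∀ x ∈ B, s ≤ ‖x - u‖) :
    μH[(k:ℝ)] (sphInv u (ρ^2 - η^2) '' B)
      ≤ ENNReal.ofReal (((ρ^2 - η^2) / s^2)^k) * μH[(k:ℝ)] B := by
  have hr2 : 0 < ρ^2 - η^2 := by nlinarith
  have hlip : LipschitzOnWith (Real.toNNReal ((ρ^2 - η^2) / s^2))
      (sphInv u (ρ^2 - η^2)) B := by
    apply LipschitzOnWith.of_dist_le_mul
    intro x hx y hy
    rw [dist_eq_norm, dist_eq_norm,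
      norm_sphInv_sub_sphInv u hr2.le (sph_ne_u hηρ hu (hB hx)) (sph_ne_u hηρ hu (hB hy)),
      Real.coe_toNNReal _ (by positivity)]
    have h1 : s * s ≤ ‖x - u‖ * ‖y - u‖ :=
      mul_le_mul (hlb x hx) (hlb y hy) hs.le (by positivity)
    have hnum : (0:ℝ) ≤ (ρ^2 - η^2) * ‖x - y‖ := by positivity
    calc (ρ^2 - η^2) * ‖x - y‖ / (‖x - u‖ * ‖y - u‖)
        ≤ (ρ^2 - η^2) * ‖x - y‖ / (s * s) :=
          div_le_div_of_nonneg_left hnum (by positivity) h1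
      _ = (ρ^2 - η^2) / s^2 * ‖x - y‖ := by ring
  have h := hlip.hausdorffMeasure_image_le (by positivity : (0:ℝ) ≤ (k:ℝ))
  have hco : ((Real.toNNReal ((ρ^2 - η^2) / s^2) : ℝ≥0∞)) ^ ((k:ℕ):ℝ)
      = ENNReal.ofReal (((ρ^2 - η^2) / s^2)^k) := by
    rw [ENNReal.rpow_natCast, ENNReal.ofReal_pow (by positivity)]
    rfl
  rwa [hco] at h

lemma hm_le_image (hη : 0 < η) (hηρ : η < ρ) (hu : ‖u‖ = ρ) {B : Set E'}
    (hB : B ⊆ sphere (0:E') η) {s' : ℝ} (hs' : 0 < s')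
    (hub : ∀ x ∈ B, ‖x - u‖ ≤ s') :
    μH[(k:ℝ)] B ≤ ENNReal.ofReal ((s'^2 / (ρ^2 - η^2))^k)
      * μH[(k:ℝ)] (sphInv u (ρ^2 - η^2) '' B) := by
  have hr2 : 0 < ρ^2 - η^2 := by nlinarith
  set T := sphInv u (ρ^2 - η^2) with hT
  have hB' : T '' B ⊆ sphere (0:E') η := by
    rintro z ⟨x, hx, rfl⟩
    exact sphInv_mapsTo hη hηρ hu (hB hx)
  have hlb : ∀ z ∈ T '' B, (ρ^2 - η^2) / s' ≤ ‖z - u‖ := by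
    rintro z ⟨x, hx, rfl⟩
    rw [hT, norm_sphInv_sub u hr2.le (sph_ne_u hηρ hu (hB hx))]
    exact div_le_div_of_nonneg_left hr2.le
      (norm_pos_iff.mpr (sub_ne_zero.mpr (sph_ne_u hηρ hu (hB hx)))) (hub x hx)
  have h := hm_image_le hη hηρ hu hB' (div_pos hr2 hs') hlb
  rw [hT, sphInv_image_image hη hηρ hu hB] at h
  have hco : ((ρ^2 - η^2) / ((ρ^2 - η^2)/s')^2 : ℝ) = s'^2 / (ρ^2 - η^2) := by
    field_simp
  rwa [hco] at h

end Measure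


section Measure

variable {k : ℕ} {ρ η : ℝ} {u : EuclideanSpace ℝ (Fin (k+1))}

local notation "E'" => EuclideanSpace ℝ (Fin (k+1))

lemma measurable_sphInv (u : EuclideanSpace ℝ (Fin (k+1))) (r2 : ℝ) :
    Measurable (sphInv u r2 : E' → E') := by
  apply measurable_const.add
  exact ((measurable_const.div
    (((measurable_id.sub measurable_const).norm).pow measurable_const))).smul
    (measurable_id.sub measurable_const)

lemma measurable_cpow_const (γ : ℂ) : Measurable fun z : ℂ => z ^ γ := by
  have h : (fun z : ℂ => z ^ γ)
      = fun z => if z = 0 then (if γ = 0 then 1 else 0) else Complex.exp (Complex.log z * γ) := by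
    funext z; rw [Complex.cpow_def]
  rw [h]
  exact Measurable.ite (measurableSet_eq_fun measurable_id measurable_const)
    measurable_const (Complex.measurable_exp.comp (Complex.measurable_log.mul_const γ))



















/-- Image of a subset of the sphere under the inversion, described by preimage. -/
lemma sphInv_image_eq_preimage (hη : 0 < η) (hηρ : η < ρ) (hu : ‖u‖ = ρ) {B : Set E'}
    (hB : B ⊆ sphere (0:E') η) :
    sphInv u (ρ^2 - η^2) '' B = sphere (0:E') η ∩ sphInv u (ρ^2 - η^2) ⁻¹' B := by
  ext z
  constructor
  · rintro ⟨x, hx, rfl⟩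
    refine ⟨sphInv_mapsTo hη hηρ hu (hB hx), ?_⟩
    rw [mem_preimage, sphInv_invol_on hη hηρ hu (hB hx)]
    exact hx
  · rintro ⟨hzS, hzB⟩
    exact ⟨_, hzB, sphInv_invol_on hη hηρ hu hzS⟩

lemma sphInv_image_measurable (hη : 0 < η) (hηρ : η < ρ) (hu : ‖u‖ = ρ) {B : Set E'}
    (hB : B ⊆ sphere (0:E') η) (hBm : MeasurableSet B) :
    MeasurableSet (sphInv u (ρ^2 - η^2) '' B) := by
  rw [sphInv_image_eq_preimage hη hηρ hu hB]
  exact (isClosed_sphere.measurableSet).inter (measurable_sphInv u _ hBm)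

lemma hm_image_eq (hη : 0 < η) (hηρ : η < ρ) (hu : ‖u‖ = ρ) {A : Set E'}
    (hA : MeasurableSet A) (hAS : A ⊆ sphere (0:E') η) :
    μH[(k:ℝ)] (sphInv u (ρ^2 - η^2) '' A)
      = ∫⁻ x in A, ENNReal.ofReal (((ρ^2 - η^2) / ‖x - u‖^2)^k)
          ∂(μH[(k:ℝ)] : Measure E') := by
  have hr2 : 0 < ρ^2 - η^2 := by nlinarith
  set r2 := ρ^2 - η^2 with hr2def
  set T : E' → E' := sphInv u r2 with hT
  set W : E' → ℝ≥0∞ := fun x => ENNReal.ofReal ((r2 / ‖x - u‖^2)^k) with hW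
  set μ : Measure E' := μH[(k:ℝ)] with hμ
  have key : ∀ q : ℝ, 1 < q →
      μ (T '' A) ≤ ENNReal.ofReal (q^(2*k)) * ∫⁻ x in A, W x ∂μ ∧
      (∫⁻ x in A, W x ∂μ) ≤ ENNReal.ofReal (q^(2*k)) * μ (T '' A) := by
    intro q hq
    have hq0 : 0 < q := lt_trans one_pos hq
    set c := ρ - η with hc
    have hcpos : 0 < c := by rw [hc]; linarith
    set s : ℕ → ℝ := fun i => c * q ^ i with hs
    have hspos : ∀ i, 0 < s i := fun i => by
      simp only [hs]; positivity
    have hsmono : ∀ i j, i ≤ j → s i ≤ s j := fun i j hij => by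
      simp only [hs]
      exact mul_le_mul_of_nonneg_left (pow_le_pow_right₀ hq.le hij) hcpos.le
    have hsucc : ∀ i, s (i+1) = s i * q := fun i => by
      simp only [hs, pow_succ]; ring
    set Ai : ℕ → Set E' := fun i => A ∩ (fun x => ‖x - u‖) ⁻¹' (Set.Ico (s i) (s (i+1)))
      with hAi
    have hnorm_meas : Measurable fun x : E' => ‖x - u‖ :=
      (measurable_id.sub measurable_const).norm
    have hmeasAi : ∀ i, MeasurableSet (Ai i) := fun i =>
      hA.inter (hnorm_meas measurableSet_Ico)
    have hAiA : ∀ i, Ai i ⊆ A := fun i => inter_subset_left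
    have hAiS : ∀ i, Ai i ⊆ sphere (0:E') η := fun i => (hAiA i).trans hAS
    have hAilb : ∀ i, ∀ x ∈ Ai i, s i ≤ ‖x - u‖ := fun i x hx => hx.2.1
    have hAiub : ∀ i, ∀ x ∈ Ai i, ‖x - u‖ ≤ s (i+1) := fun i x hx => hx.2.2.le
    have hcover : A = ⋃ i, Ai i := by
      ext x
      simp only [hAi, mem_iUnion, mem_inter_iff, mem_preimage, mem_Ico]
      constructor
      · intro hx
        have hdc : c ≤ ‖x - u‖ := sph_dist_lb hηρ hu (hAS hx)
        have hPex : ∃ n, ‖x - u‖ < c * q ^ n := by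
          obtain ⟨n, hn⟩ := pow_unbounded_of_one_lt (‖x - u‖ / c) hq
          exact ⟨n, by rw [div_lt_iff₀ hcpos] at hn; linarith [hn, mul_comm (q ^ n) c]⟩
        classical
        set n0 := Nat.find hPex with hn0
        have hn0spec : ‖x - u‖ < c * q ^ n0 := Nat.find_spec hPex
        have hn0pos : n0 ≠ 0 := by
          intro h0
          rw [h0] at hn0spec
          simp only [pow_zero, mul_one] at hn0spec
          linarith
        obtain ⟨i, hi⟩ : ∃ i, n0 = i + 1 :=
          ⟨n0 - 1, (Nat.succ_pred_eq_of_pos (Nat.pos_of_ne_zero hn0pos)).symm⟩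
        have hmin : ¬ (‖x - u‖ < c * q ^ i) := Nat.find_min hPex (by omega)
        refine ⟨i, hx, ?_, ?_⟩
        · simpa only [hs] using not_lt.mp hmin
        · simpa only [hs, ← hi] using hn0spec
      · rintro ⟨i, hxA, _⟩; exact hxA
    have hdisj : Pairwise (Function.onFun Disjoint Ai) := by
      intro i j hij
      apply Set.disjoint_left.mpr
      rintro x ⟨hxA, hxI⟩ ⟨hxA', hxI'⟩
      simp only [mem_preimage, mem_Ico] at hxI hxI'
      rcases lt_or_gt_of_ne hij with h | h
      · have h2 : s (i+1) ≤ s j := hsmono _ _ (Nat.succ_le_of_lt h)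
        linarith [hxI.2, hxI'.1]
      · have h2 : s (j+1) ≤ s i := hsmono _ _ (Nat.succ_le_of_lt h)
        linarith [hxI.1, hxI'.2]
    have hdisjT : Pairwise (Function.onFun Disjoint fun i => T '' Ai i) := by
      intro i j hij
      apply Set.disjoint_left.mpr
      rintro z ⟨x, hx, rfl⟩ ⟨y, hy, hxy⟩
      have hyx : y = x := by
        have h1 : T (T y) = T (T x) := by rw [hxy]
        rwa [hT, sphInv_invol_on hη hηρ hu (hAiS j hy),
          sphInv_invol_on hη hηρ hu (hAiS i hx)] at h1
      exact Set.disjoint_left.mp (hdisj hij) hx (hyx ▸ hy)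
    have hWmeas : Measurable W := by
      apply ENNReal.measurable_ofReal.comp
      exact (measurable_const.div (hnorm_meas.pow measurable_const)).pow measurable_const
    have hcoefE : ∀ i, ENNReal.ofReal ((r2 / (s i)^2)^k)
        = ENNReal.ofReal (q^(2*k)) * ENNReal.ofReal ((r2 / (s (i+1))^2)^k) := by
      intro i
      rw [← ENNReal.ofReal_mul (by positivity)]
      congr 1
      rw [hsucc i]
      have h1 : r2 / (s i)^2 = q^2 * (r2 / (s i * q)^2) := by
        have := (hspos i).ne'
        field_simp
      rw [h1, mul_pow, ← pow_mul]
    have himgA : T '' A = ⋃ i, T '' Ai i := by rw [hcover, image_iUnion]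
    have hμsum : μ (T '' A) = ∑' i, μ (T '' Ai i) := by
      rw [himgA]
      exact measure_iUnion hdisjT fun i =>
        sphInv_image_measurable hη hηρ hu (hAiS i) (hmeasAi i)
    have hWsum : (∫⁻ x in A, W x ∂μ) = ∑' i, ∫⁻ x in Ai i, W x ∂μ := by
      conv_lhs => rw [hcover]
      exact lintegral_iUnion hmeasAi hdisj _
    constructor
    · -- upper bound
      rw [hμsum, hWsum, ← ENNReal.tsum_mul_left]
      apply ENNReal.tsum_le_tsum
      intro i
      have h1 := hm_image_le hη hηρ hu (hAiS i) (hspos i) (hAilb i)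
      have h2 : ENNReal.ofReal ((r2 / (s (i+1))^2)^k) * μ (Ai i)
          ≤ ∫⁻ x in Ai i, W x ∂μ := by
        rw [← setLIntegral_const]
        apply setLIntegral_mono' (hmeasAi i)
        intro x hx
        apply ENNReal.ofReal_le_ofReal
        apply pow_le_pow_left₀ (by positivity)
        apply div_le_div_of_nonneg_left hr2.le
        · have := lt_of_lt_of_le (hspos i) (hAilb i x hx); positivity
        · exact pow_le_pow_left₀ (le_of_lt (lt_of_lt_of_le (hspos i) (hAilb i x hx)))
            (hAiub i x hx) 2
      calc μ (T '' Ai i) ≤ ENNReal.ofReal ((r2 / (s i)^2)^k) * μ (Ai i) := h1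
        _ = ENNReal.ofReal (q^(2*k)) * (ENNReal.ofReal ((r2 / (s (i+1))^2)^k) * μ (Ai i)) := by
            rw [hcoefE i, mul_assoc]
        _ ≤ ENNReal.ofReal (q^(2*k)) * ∫⁻ x in Ai i, W x ∂μ := mul_le_mul_right h2 _
    · -- lower bound
      rw [hμsum, hWsum, ← ENNReal.tsum_mul_left]
      apply ENNReal.tsum_le_tsum
      intro i
      have h1 : (∫⁻ x in Ai i, W x ∂μ) ≤ ENNReal.ofReal ((r2 / (s i)^2)^k) * μ (Ai i) := by
        rw [← setLIntegral_const]
        apply setLIntegral_mono' (hmeasAi i)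
        intro x hx
        apply ENNReal.ofReal_le_ofReal
        apply pow_le_pow_left₀ (by positivity)
        apply div_le_div_of_nonneg_left hr2.le
        · exact pow_pos (hspos i) 2
        · exact pow_le_pow_left₀ (by positivity) (hAilb i x hx) 2
      have h2 := hm_le_image hη hηρ hu (hAiS i) (hspos (i+1)) (hAiub i)
      calc (∫⁻ x in Ai i, W x ∂μ) ≤ ENNReal.ofReal ((r2 / (s i)^2)^k) * μ (Ai i) := h1
        _ ≤ ENNReal.ofReal ((r2 / (s i)^2)^k)
            * (ENNReal.ofReal (((s (i+1))^2 / r2)^k) * μ (T '' Ai i)) := mul_le_mul_right h2 _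
        _ = ENNReal.ofReal (q^(2*k)) * μ (T '' Ai i) := by
            rw [← mul_assoc, ← ENNReal.ofReal_mul (by positivity)]
            congr 2
            rw [← mul_pow, hsucc i, pow_mul]
            congr 1
            have h3 := (hspos i).ne'
            field_simp
  apply le_antisymm
  · exact ennreal_squeeze_aux (k := k) fun q hq => (key q hq).1
  · exact ennreal_squeeze_aux (k := k) fun q hq => (key q hq).2

end Measure


section Final

variable {k : ℕ} {ρ η : ℝ} {u : EuclideanSpace ℝ (Fin (k+1))}

local notation "E'" => EuclideanSpace ℝ (Fin (k+1))




lemma map_sphInv_eq (hη : 0 < η) (hηρ : η < ρ) (hu : ‖u‖ = ρ) :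
    Measure.map (sphInv u (ρ^2 - η^2))
        ((μH[(k:ℝ)] : Measure E').restrict (sphere (0:E') η))
      = ((μH[(k:ℝ)] : Measure E').restrict (sphere (0:E') η)).withDensity
          (fun x => ENNReal.ofReal (((ρ^2 - η^2) / ‖x - u‖^2)^k)) := by
  ext A hA
  rw [Measure.map_apply (measurable_sphInv u _) hA,
    Measure.restrict_apply (measurable_sphInv u _ hA),
    withDensity_apply _ hA]
  have hset : sphInv u (ρ^2 - η^2) ⁻¹' A ∩ sphere (0:E') η
      = sphInv u (ρ^2 - η^2) '' (A ∩ sphere (0:E') η) := by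
    ext z
    constructor
    · rintro ⟨hzA, hzS⟩
      exact ⟨sphInv u (ρ^2 - η^2) z, ⟨hzA, sphInv_mapsTo hη hηρ hu hzS⟩,
        sphInv_invol_on hη hηρ hu hzS⟩
    · rintro ⟨x, ⟨hxA, hxS⟩, rfl⟩
      refine ⟨?_, sphInv_mapsTo hη hηρ hu hxS⟩
      rw [mem_preimage, sphInv_invol_on hη hηρ hu hxS]
      exact hxA
  rw [hset, hm_image_eq hη hηρ hu (hA.inter isClosed_sphere.measurableSet)
    inter_subset_right]
  rw [Measure.restrict_restrict hA]

/-- If `α + β = k`, `0 < η < ρ`, `u` fixed on the sphere of radius `ρ`, and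
`ω(m,u) = (ρ² − η²)/‖u−m‖²` for `m` on the sphere of radius `η`, then
`∫_{S^k(η)} ω^α dS_m = ∫_{S^k(η)} ω^β dS_m`. -/
theorem stmt14 (k : ℕ) (ρ η : ℝ) (hη : 0 < η) (hηρ : η < ρ)
    (α β : ℂ) (hαβ : α + β = (k : ℂ))
    (u : EuclideanSpace ℝ (Fin (k+1))) (hu : ‖u‖ = ρ) :
    (∫ m in sphere (0 : EuclideanSpace ℝ (Fin (k+1))) η,
        (((ρ^2 - η^2) / ‖u - m‖^2 : ℝ) : ℂ) ^ α ∂(μH[(k : ℝ)])) =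
    ∫ m in sphere (0 : EuclideanSpace ℝ (Fin (k+1))) η,
        (((ρ^2 - η^2) / ‖u - m‖^2 : ℝ) : ℂ) ^ β ∂(μH[(k : ℝ)]) := by
  have hr2 : 0 < ρ^2 - η^2 := by nlinarith
  set S : Set (EuclideanSpace ℝ (Fin (k+1))) := sphere 0 η with hS
  set μ : Measure (EuclideanSpace ℝ (Fin (k+1))) := μH[(k:ℝ)] with hμ
  set T := sphInv u (ρ^2 - η^2) with hT
  set F : ℂ → EuclideanSpace ℝ (Fin (k+1)) → ℂ :=
    fun γ x => (((ρ^2 - η^2) / ‖u - x‖^2 : ℝ) : ℂ) ^ γ with hF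
  -- basic positivity on the sphere
  have homega : ∀ x ∈ S, 0 < ((ρ^2 - η^2) / ‖u - x‖^2 : ℝ) := by
    intro x hx
    have hxu : x ≠ u := sph_ne_u hηρ hu hx
    have h0 : (0:ℝ) < ‖u - x‖ := by
      rw [norm_sub_rev]
      exact norm_pos_iff.mpr (sub_ne_zero.mpr hxu)
    positivity
  -- measurability of F γ
  have hFmeas : ∀ γ : ℂ, Measurable (F γ) := by
    intro γ
    apply (measurable_cpow_const γ).comp
    apply Complex.measurable_ofReal.comp
    exact measurable_const.div
      (((measurable_const.sub measurable_id).norm).pow measurable_const)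
  -- the main identity : ∫ F (-γ) = ∫ F (γ + k) over S
  have main : ∀ γ : ℂ, (∫ x in S, F (-γ) x ∂μ) = ∫ x in S, F (γ + k) x ∂μ := by
    intro γ
    -- step 1 : ∫ F γ ∘ T = ∫ F γ d(map T μS) = ∫ (density) • F γ
    have h1 : (∫ x in S, F γ (T x) ∂μ)
        = ∫ x, F γ x ∂(Measure.map T (μ.restrict S)) := by
      rw [integral_map (measurable_sphInv u _).aemeasurable
        (hFmeas γ).aestronglyMeasurable]
    have h2 : (∫ x, F γ x ∂(Measure.map T (μ.restrict S)))
        = ∫ x in S, (Real.toNNReal (((ρ^2 - η^2) / ‖x - u‖^2)^k)) • F γ x ∂μ := by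
      rw [hT, map_sphInv_eq hη hηρ hu]
      have : (fun x => ENNReal.ofReal (((ρ^2 - η^2) / ‖x - u‖^2)^k))
          = fun x => ((Real.toNNReal (((ρ^2 - η^2) / ‖x - u‖^2)^k) : ℝ≥0) : ℝ≥0∞) :=
        rfl
      rw [this]
      apply integral_withDensity_eq_integral_smul
      exact measurable_real_toNNReal.comp
        ((measurable_const.div (((measurable_id.sub measurable_const).norm).pow
          measurable_const)).pow measurable_const)
    -- pointwise identities on S
    have e1 : ∀ x ∈ S, F γ (T x) = F (-γ) x := by
      intro x hx
      have hxu : x ≠ u := sph_ne_u hηρ hu hx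
      have hxn : (0:ℝ) < ‖x - u‖ := norm_pos_iff.mpr (sub_ne_zero.mpr hxu)
      have hnorm : ‖u - T x‖ = (ρ^2 - η^2) / ‖x - u‖ := by
        rw [norm_sub_rev, hT, norm_sphInv_sub u hr2.le hxu]
      have harg : ((ρ^2 - η^2) / ‖u - x‖^2 : ℝ) ≠ 0 :=
        ne_of_gt (homega x hx)
      have hval : ((ρ^2 - η^2) / ‖u - T x‖^2 : ℝ)
          = (((ρ^2 - η^2) / ‖u - x‖^2 : ℝ))⁻¹ := by
        rw [hnorm, norm_sub_rev u x]
        field_simp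
      simp only [hF]
      rw [hval, Complex.ofReal_inv]
      rw [Complex.inv_cpow _ _ ?harg]
      · rw [← Complex.cpow_neg]
      case harg =>
        rw [Complex.arg_ofReal_of_nonneg (le_of_lt ?_)]
        · exact Real.pi_ne_zero.symm
        · have := homega x hx
          rwa [norm_sub_rev u x] at this ⊢
    have e2 : ∀ x ∈ S, (Real.toNNReal (((ρ^2 - η^2) / ‖x - u‖^2)^k)) • F γ x
        = F (γ + k) x := by
      intro x hx
      have hpos := homega x hx
      have hne : (((ρ^2 - η^2) / ‖u - x‖^2 : ℝ) : ℂ) ≠ 0 :=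
        Complex.ofReal_ne_zero.mpr (ne_of_gt hpos)
      have hcoe : ((Real.toNNReal (((ρ^2 - η^2) / ‖x - u‖^2)^k) : ℝ≥0) : ℝ)
          = ((ρ^2 - η^2) / ‖u - x‖^2)^k := by
        rw [Real.coe_toNNReal _ (by positivity), norm_sub_rev x u]
      simp only [hF]
      rw [NNReal.smul_def, hcoe]
      rw [Complex.real_smul, Complex.ofReal_pow]
      rw [Complex.cpow_add _ _ hne, Complex.cpow_natCast]
      ring
    calc (∫ x in S, F (-γ) x ∂μ)
        = ∫ x in S, F γ (T x) ∂μ := by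
          apply setIntegral_congr_fun isClosed_sphere.measurableSet
          intro x hx
          exact (e1 x hx).symm
      _ = ∫ x in S, (Real.toNNReal (((ρ^2 - η^2) / ‖x - u‖^2)^k)) • F γ x ∂μ := by
          rw [h1, h2]
      _ = ∫ x in S, F (γ + k) x ∂μ := by
          apply setIntegral_congr_fun isClosed_sphere.measurableSet
          intro x hx
          exact e2 x hx
  have hmain := main (-α)
  rw [neg_neg] at hmain
  have hβ : -α + (k:ℂ) = β := by linear_combination -hαβ
  rw [hβ] at hmain
  exact hmain

end Final
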